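/- Let N ≥ 1 and let (a₀⁽ⁱ⁾, a₁⁽ⁱ⁾, b₀⁽ⁱ⁾, b₁⁽ⁱ⁾) for i = 1,…,N be random 4-tuples on a probability space, each component taking values in [0,1], with the family of tuples indexed by i mutually independent, and such that for every i, Cov(a₀⁽ⁱ⁾,b₀⁽ⁱ⁾) + Cov(a₀⁽ⁱ⁾,b₁⁽ⁱ⁾) + Cov(a₁⁽ⁱ⁾,b₀⁽ⁱ⁾) − Cov(a₁⁽ⁱ⁾,b₁⁽ⁱ⁾) = 1/√2. Define A'ₓ := Σᵢ aₓ⁽ⁱ⁾ and B'_y := Σᵢ b_y⁽ⁱ⁾. Then 𝓑(A'₀, A'₁, B'₀, B'₁) = 2√2. -/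

import Mathlib

open MeasureTheory ProbabilityTheory

/-- The covariance of two real random variables. -/
noncomputable def cov {Ω : Type*} [MeasurableSpace Ω] (μ : Measure Ω) (X Y : Ω → ℝ) : ℝ :=
  ∫ ω, (X ω - ∫ ω', X ω' ∂μ) * (Y ω - ∫ ω', Y ω' ∂μ) ∂μ

/-- The macroscopic Bell parameter. -/
noncomputable def bell {Ω : Type*} [MeasurableSpace Ω] (μ : Measure Ω) (N : ℝ)
    (A₀ A₁ B₀ B₁ : Ω → ℝ) : ℝ :=
  (4 / N) * (cov μ A₀ B₀ + cov μ A₀ B₁ + cov μ A₁ B₀ - cov μ A₁ B₁)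

section aux
variable {Ω : Type*} [MeasurableSpace Ω] {μ : Measure Ω} [IsProbabilityMeasure μ]

lemma integrable_of_Icc {X : Ω → ℝ} (hm : Measurable X) (hb : ∀ ω, X ω ∈ Set.Icc (0:ℝ) 1) :
    Integrable X μ := by
  refine Integrable.mono' (integrable_const 1) hm.aestronglyMeasurable ?_
  filter_upwards with ω
  rw [Real.norm_eq_abs, abs_le]
  exact ⟨by linarith [(hb ω).1], (hb ω).2⟩

lemma cov_sum {N : ℕ} (X Y : Fin N → Ω → ℝ)
    (hXm : ∀ i, Measurable (X i)) (hYm : ∀ i, Measurable (Y i))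
    (hXb : ∀ i ω, X i ω ∈ Set.Icc (0:ℝ) 1) (hYb : ∀ i ω, Y i ω ∈ Set.Icc (0:ℝ) 1)
    (hind : ∀ i j, i ≠ j → IndepFun (X i) (Y j) μ) :
    cov μ (fun ω => ∑ i, X i ω) (fun ω => ∑ i, Y i ω) = ∑ i, cov μ (X i) (Y i) := by
  have hXi : ∀ i, Integrable (X i) μ := fun i => integrable_of_Icc (hXm i) (hXb i)
  have hYi : ∀ i, Integrable (Y i) μ := fun i => integrable_of_Icc (hYm i) (hYb i)
  set Xc : Fin N → Ω → ℝ := fun i ω => X i ω - ∫ ω', X i ω' ∂μ with hXc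
  set Yc : Fin N → Ω → ℝ := fun i ω => Y i ω - ∫ ω', Y i ω' ∂μ with hYc
  have hXcm : ∀ i, Measurable (Xc i) := fun i => (hXm i).sub measurable_const
  have hYcm : ∀ i, Measurable (Yc i) := fun i => (hYm i).sub measurable_const
  have hXmean : ∀ i, (∫ ω', X i ω' ∂μ) ∈ Set.Icc (0:ℝ) 1 := by
    intro i
    constructor
    · exact integral_nonneg fun ω => (hXb i ω).1
    · calc ∫ ω', X i ω' ∂μ ≤ ∫ _ω', (1:ℝ) ∂μ :=
            integral_mono (hXi i) (integrable_const 1) fun ω => (hXb i ω).2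
        _ = 1 := by simp
  have hYmean : ∀ i, (∫ ω', Y i ω' ∂μ) ∈ Set.Icc (0:ℝ) 1 := by
    intro i
    constructor
    · exact integral_nonneg fun ω => (hYb i ω).1
    · calc ∫ ω', Y i ω' ∂μ ≤ ∫ _ω', (1:ℝ) ∂μ :=
            integral_mono (hYi i) (integrable_const 1) fun ω => (hYb i ω).2
        _ = 1 := by simp
  have hXcb : ∀ i ω, |Xc i ω| ≤ 1 := by
    intro i ω
    rw [abs_le]
    constructor <;> simp only [hXc] <;>
      [linarith [(hXb i ω).1, (hXmean i).2]; linarith [(hXb i ω).2, (hXmean i).1]]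
  have hYcb : ∀ i ω, |Yc i ω| ≤ 1 := by
    intro i ω
    rw [abs_le]
    constructor <;> simp only [hYc] <;>
      [linarith [(hYb i ω).1, (hYmean i).2]; linarith [(hYb i ω).2, (hYmean i).1]]
  have hXci : ∀ i, Integrable (Xc i) μ :=
    fun i => (hXi i).sub (integrable_const _)
  have hYci : ∀ i, Integrable (Yc i) μ :=
    fun i => (hYi i).sub (integrable_const _)
  have hXczero : ∀ i, ∫ ω, Xc i ω ∂μ = 0 := by
    intro i
    simp only [hXc]
    rw [integral_sub (hXi i) (integrable_const _), integral_const]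
    simp
  have hYczero : ∀ i, ∫ ω, Yc i ω ∂μ = 0 := by
    intro i
    simp only [hYc]
    rw [integral_sub (hYi i) (integrable_const _), integral_const]
    simp
  have hprodint : ∀ i j, Integrable (fun ω => Xc i ω * Yc j ω) μ := by
    intro i j
    refine Integrable.mono' (integrable_const 1) ((hXcm i).mul (hYcm j)).aestronglyMeasurable ?_
    filter_upwards with ω
    rw [Real.norm_eq_abs, abs_mul]
    calc |Xc i ω| * |Yc j ω| ≤ 1 * 1 :=
          mul_le_mul (hXcb i ω) (hYcb j ω) (abs_nonneg _) zero_le_one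
      _ = 1 := one_mul 1
  have hoff : ∀ i j, i ≠ j → ∫ ω, Xc i ω * Yc j ω ∂μ = 0 := by
    intro i j hij
    have hcind : IndepFun (Xc i) (Yc j) μ :=
      (hind i j hij).comp (measurable_id.sub measurable_const)
        (measurable_id.sub measurable_const)
    have h := hcind.integral_fun_mul_eq_mul_integral (hXcm i).aestronglyMeasurable (hYcm j).aestronglyMeasurable
    rw [hXczero i, hYczero j, mul_zero] at h
    exact h
  have hsumX : (∫ ω', (∑ i, X i ω') ∂μ) = ∑ i, ∫ ω', X i ω' ∂μ :=
    integral_finset_sum _ fun i _ => hXi i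
  have hsumY : (∫ ω', (∑ i, Y i ω') ∂μ) = ∑ i, ∫ ω', Y i ω' ∂μ :=
    integral_finset_sum _ fun i _ => hYi i
  unfold cov
  rw [hsumX, hsumY]
  have hexp : ∀ ω, ((∑ i, X i ω) - ∑ i, ∫ ω', X i ω' ∂μ) * ((∑ i, Y i ω) - ∑ i, ∫ ω', Y i ω' ∂μ)
      = ∑ i, ∑ j, Xc i ω * Yc j ω := by
    intro ω
    rw [← Finset.sum_sub_distrib, ← Finset.sum_sub_distrib, Finset.sum_mul_sum]
  simp only [hexp]
  rw [integral_finset_sum _ fun i _ => integrable_finset_sum _ fun j _ => hprodint i j]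
  have : ∀ i, ∫ ω, (∑ j, Xc i ω * Yc j ω) ∂μ = ∑ j, ∫ ω, Xc i ω * Yc j ω ∂μ :=
    fun i => integral_finset_sum _ fun j _ => hprodint i j
  simp only [this]
  refine Finset.sum_congr rfl fun i _ => ?_
  rw [Finset.sum_eq_single i (fun j _ hji => hoff i j (Ne.symm hji))
    (fun h => absurd (Finset.mem_univ i) h)]

end aux

/-- Ideal quantum violation of the macroscopic Bell inequality: for `N` mutually
independent microscopic 4-tuples of `[0,1]`-valued random variables, each with
CHSH covariance combination `1/√2` (as achieved by a singlet with optimal CHSH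
settings), the macroscopic Bell parameter of the summed variables equals `2√2`. -/
theorem macroscopic_bell_quantum_ideal {Ω : Type*} [MeasurableSpace Ω] (μ : Measure Ω)
    [IsProbabilityMeasure μ] (N : ℕ) (hN : 1 ≤ N)
    (a b : Fin 2 → Fin N → Ω → ℝ)
    (hameas : ∀ x i, Measurable (a x i)) (hbmeas : ∀ y i, Measurable (b y i))
    (har : ∀ x i ω, a x i ω ∈ Set.Icc (0 : ℝ) 1)
    (hbr : ∀ y i ω, b y i ω ∈ Set.Icc (0 : ℝ) 1)
    (hindep : iIndepFun
      (fun i ω => (a 0 i ω, a 1 i ω, b 0 i ω, b 1 i ω)) μ)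
    (hcov : ∀ i, cov μ (a 0 i) (b 0 i) + cov μ (a 0 i) (b 1 i)
      + cov μ (a 1 i) (b 0 i) - cov μ (a 1 i) (b 1 i) = 1 / Real.sqrt 2) :
    bell μ N (fun ω => ∑ i, a 0 i ω) (fun ω => ∑ i, a 1 i ω)
      (fun ω => ∑ i, b 0 i ω) (fun ω => ∑ i, b 1 i ω) = 2 * Real.sqrt 2 := by
  have hind : ∀ (x y : Fin 2) (i j : Fin N), i ≠ j → IndepFun (a x i) (b y j) μ := by
    intro x y i j hij
    have h := hindep.indepFun hij
    fin_cases x <;> fin_cases y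
    · exact h.comp measurable_fst (measurable_fst.comp (measurable_snd.comp measurable_snd))
    · exact h.comp measurable_fst (measurable_snd.comp (measurable_snd.comp measurable_snd))
    · exact h.comp (measurable_fst.comp measurable_snd)
        (measurable_fst.comp (measurable_snd.comp measurable_snd))
    · exact h.comp (measurable_fst.comp measurable_snd)
        (measurable_snd.comp (measurable_snd.comp measurable_snd))
  have hcs : ∀ x y : Fin 2, cov μ (fun ω => ∑ i, a x i ω) (fun ω => ∑ i, b y i ω)
      = ∑ i, cov μ (a x i) (b y i) := fun x y =>
    cov_sum (a x) (b y) (hameas x) (hbmeas y) (har x) (hbr y) (hind x y)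
  unfold bell
  rw [hcs 0 0, hcs 0 1, hcs 1 0, hcs 1 1]
  rw [← Finset.sum_add_distrib, ← Finset.sum_add_distrib, ← Finset.sum_sub_distrib]
  simp only [hcov]
  rw [Finset.sum_const, Finset.card_univ, Fintype.card_fin, nsmul_eq_mul]
  have hNne : (N : ℝ) ≠ 0 := Nat.cast_ne_zero.mpr (by omega)
  have hs : Real.sqrt 2 * Real.sqrt 2 = 2 := Real.mul_self_sqrt (by norm_num)
  have hsne : Real.sqrt 2 ≠ 0 := by positivity
  field_simp
  linarith [hs]
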